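/- arXiv:2603.03894 — 2 statements merged into one kernel-verified Lean document; each statement's English description precedes it below -/
import Mathlib

section
/- Let G=(V,E) be a finite simple graph without isolated vertices. For every tube t of G, the point z_t = h_t/|h_t|_1 is a vertex (extreme point) of the dual cosmological polytope C_G° = conv{ z_s : s ∈ Z(G) }. -/
set_option linter.unusedSectionVars false
set_option linter.unusedVariables false

open Finset

variable {V : Type} [Fintype V] [DecidableEq V]

/-- A tube of the graph on vertex type `V` with edge set `E`: a nonempty connected
(not necessarily induced) subgraph, recorded by its vertex set and edge set.
(The field `verts_in` records that all vertices of a tube are vertices of the graph,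
where, the graph having no isolated vertices, its vertex set is the set of endpoints of `E`.) -/
structure Tube (E : Finset (Sym2 V)) where
  verts : Finset V
  edges : Finset (Sym2 V)
  nonempty : verts.Nonempty
  edges_sub : edges ⊆ E
  verts_in : ∀ v ∈ verts, ∃ e ∈ E, v ∈ e
  endpoints_mem : ∀ e ∈ edges, ∀ v ∈ e, v ∈ verts
  conn : ∀ u ∈ verts, ∀ w ∈ verts,
    Relation.ReflTransGen (fun a b => s(a, b) ∈ edges) u w

theorem Tube.ext' {E : Finset (Sym2 V)} {a b : Tube E}
    (h1 : a.verts = b.verts) (h2 : a.edges = b.edges) : a = b := by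
  cases a; cases b; subst h1; subst h2; rfl

instance {E : Finset (Sym2 V)} : DecidableEq (Tube E) := fun a b =>
  decidable_of_iff (a.verts = b.verts ∧ a.edges = b.edges)
    ⟨fun h => Tube.ext' h.1 h.2, fun h => by subst h; exact ⟨rfl, rfl⟩⟩

noncomputable instance {E : Finset (Sym2 V)} : Fintype (Tube E) :=
  Fintype.ofInjective (fun t => (t.verts, t.edges))
    (fun a b h => Tube.ext' (congrArg Prod.fst h) (congrArg Prod.snd h))

/-- The coordinates of the ambient space `ℝ^(V ⊔ E)`. -/
abbrev Coord (E : Finset (Sym2 V)) := V ⊕ {e : Sym2 V // e ∈ E}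

/-- The standard inner product on `ℝ^(V ⊔ E)`. -/
def dot {E : Finset (Sym2 V)} (x y : Coord E → ℝ) : ℝ := ∑ i, x i * y i

/-- The facet normal `h_t = Σ_{v ∈ V(t)} x_v + Σ_{e ∈ E∖E(t)} |e ∩ V(t)|·y_e`. -/
def hvec {E : Finset (Sym2 V)} (t : Tube E) : Coord E → ℝ := fun i =>
  match i with
  | Sum.inl v => if v ∈ t.verts then 1 else 0
  | Sum.inr e => if e.1 ∈ t.edges then 0
      else ((t.verts.filter (fun v => v ∈ e.1)).card : ℝ)

/-- `|h_t|₁`, the sum of the coordinates of `h_t`. -/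
def ell {E : Finset (Sym2 V)} (t : Tube E) : ℝ := ∑ i, hvec t i

/-- `z_t = h_t / |h_t|₁`. -/
noncomputable def zvec {E : Finset (Sym2 V)} (t : Tube E) : Coord E → ℝ := (ell t)⁻¹ • hvec t

/-- The vertices `p_e, p_{e,v}, p_{e,w}` of the cosmological polytope (note that
`p_{e,w}` is obtained from `p_{e,v}` by exchanging the roles of `v` and `w`). -/
def cosmoVerts (E : Finset (Sym2 V)) : Set (Coord E → ℝ) :=
  {q | ∃ (v w : V) (he : s(v, w) ∈ E),
      q = Pi.single (Sum.inl v) 1 + Pi.single (Sum.inl w) 1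
            - Pi.single (Sum.inr ⟨s(v, w), he⟩) 1 ∨
      q = Pi.single (Sum.inl v) 1 - Pi.single (Sum.inl w) 1
            + Pi.single (Sum.inr ⟨s(v, w), he⟩) 1}

/-- The cosmological polytope `C_G`. -/
def cosmo (E : Finset (Sym2 V)) : Set (Coord E → ℝ) := convexHull ℝ (cosmoVerts E)

/-- The dual cosmological polytope `C_G° = conv{ z_t : t a tube }`. -/
def dualCosmo (E : Finset (Sym2 V)) : Set (Coord E → ℝ) :=
  convexHull ℝ {z | ∃ t : Tube E, z = zvec t}

/-- The affine hyperplane `H` of points whose coordinates sum to `1`. -/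
def hyperplaneH (E : Finset (Sym2 V)) : Set (Coord E → ℝ) := {z | ∑ i, z i = 1}

/-- A tubing: a set of tubes, pairwise disjoint or nested. -/
def IsTubing (E : Finset (Sym2 V)) (T : Finset (Tube E)) : Prop :=
  ∀ t₁ ∈ T, ∀ t₂ ∈ T,
    Disjoint t₁.verts t₂.verts ∨ t₁.edges ⊆ t₂.edges ∨ t₂.edges ⊆ t₁.edges

/-- A maximal tubing: a tubing maximal under inclusion. -/
def IsMaxTubing (E : Finset (Sym2 V)) (T : Finset (Tube E)) : Prop :=
  IsTubing E T ∧ ∀ T' : Finset (Tube E), IsTubing E T' → T ⊆ T' → T' = T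

/-- `F` is a face of the polytope `P`: `P` itself, `∅`, or the intersection of `P`
with a supporting hyperplane. -/
def IsFace {E : Finset (Sym2 V)} (F P : Set (Coord E → ℝ)) : Prop :=
  F = P ∨ F = ∅ ∨
    ∃ (a : Coord E → ℝ) (c : ℝ), (∀ x ∈ P, c ≤ dot a x) ∧ F = {x | x ∈ P ∧ dot a x = c}

section AuxStatement1

variable {E : Finset (Sym2 V)}

/-- `|e ∩ A|` as a natural number. -/
def tcap (A : Finset V) (e : Sym2 V) : ℕ := (A.filter (fun v => v ∈ e)).card

/-- The separating functional for the tube `t`. -/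
def avec (t : Tube E) : Coord E → ℝ := fun i =>
  match i with
  | Sum.inl u => ∑ e ∈ E.filter (fun e => e ∉ t.edges ∧ u ∈ e),
      ((tcap t.verts e : ℝ) + 1 - 2 * (if u ∈ t.verts then 1 else 0))
  | Sum.inr e => if e.1 ∈ t.edges then 2 else 1 - (tcap t.verts e.1 : ℝ)

/-- The per-edge contribution to `dot (avec t) (hvec s)`. -/
def term (t s : Tube E) (e : Sym2 V) : ℝ :=
  (if e ∈ t.edges then 0 else
    ∑ u ∈ s.verts.filter (fun v => v ∈ e),
      ((tcap t.verts e : ℝ) + 1 - 2 * (if u ∈ t.verts then 1 else 0)))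
  + (if e ∈ s.edges then 0 else (tcap s.verts e : ℝ))
      * (if e ∈ t.edges then 2 else 1 - (tcap t.verts e : ℝ))

lemma exists_rep {e : Sym2 V} (hd : ¬ e.IsDiag) : ∃ v w : V, v ≠ w ∧ e = s(v, w) := by
  induction e using Sym2.ind with
  | _ v w => exact ⟨v, w, fun h => hd (Sym2.mk_isDiag_iff.mpr h), rfl⟩

lemma filter_mem_pair (A : Finset V) (v w : V) :
    A.filter (fun u => u ∈ s(v, w)) = A.filter (fun u => u = v) ∪ A.filter (fun u => u = w) := by
  rw [← Finset.filter_or]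
  apply Finset.filter_congr
  intro u _
  simp [Sym2.mem_iff]

lemma disj_pair (A : Finset V) {v w : V} (hvw : v ≠ w) :
    Disjoint (A.filter (fun u => u = v)) (A.filter (fun u => u = w)) := by
  rw [Finset.filter_eq', Finset.filter_eq']
  split_ifs <;> simp [hvw, Ne.symm hvw]

lemma tcap_pair (A : Finset V) {v w : V} (hvw : v ≠ w) :
    (tcap A s(v, w) : ℝ) = (if v ∈ A then 1 else 0) + (if w ∈ A then 1 else 0) := by
  unfold tcap
  rw [filter_mem_pair, Finset.card_union_of_disjoint (disj_pair A hvw),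
    Finset.filter_eq', Finset.filter_eq']
  split_ifs <;> norm_num

lemma sum_pair (A : Finset V) {v w : V} (hvw : v ≠ w) (g : V → ℝ) :
    ∑ u ∈ A.filter (fun u => u ∈ s(v, w)), g u
      = (if v ∈ A then g v else 0) + (if w ∈ A then g w else 0) := by
  rw [filter_mem_pair, Finset.sum_union (disj_pair A hvw),
    Finset.filter_eq', Finset.filter_eq']
  split_ifs <;> simp

lemma dot_decomp (t s : Tube E) : dot (avec t) (hvec s) = ∑ e ∈ E, term t s e := by
  classical
  have hA : ∀ (A : Finset V) (g : V → ℝ), ∑ u ∈ A, g u = ∑ u : V, if u ∈ A then g u else 0 := by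
    intro A g
    rw [Finset.sum_ite_mem, Finset.univ_inter]
  rw [dot, Fintype.sum_sum_type]
  have hx : ∑ u : V, avec t (Sum.inl u) * hvec s (Sum.inl u)
      = ∑ e ∈ E, (if e ∈ t.edges then 0 else
          ∑ u ∈ s.verts.filter (fun v => v ∈ e),
            ((tcap t.verts e : ℝ) + 1 - 2 * (if u ∈ t.verts then 1 else 0))) := by
    have step1 : ∀ u : V, avec t (Sum.inl u) * hvec s (Sum.inl u)
        = ∑ e ∈ E, (if e ∉ t.edges ∧ u ∈ e ∧ u ∈ s.verts then
            ((tcap t.verts e : ℝ) + 1 - 2 * (if u ∈ t.verts then 1 else 0)) else 0) := by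
      intro u
      show (∑ e ∈ E.filter (fun e => e ∉ t.edges ∧ u ∈ e),
          ((tcap t.verts e : ℝ) + 1 - 2 * (if u ∈ t.verts then 1 else 0)))
          * (if u ∈ s.verts then (1:ℝ) else 0) = _
      by_cases hus : u ∈ s.verts
      · rw [if_pos hus, mul_one, Finset.sum_filter]
        refine Finset.sum_congr rfl fun e he => ?_
        by_cases h1 : e ∉ t.edges ∧ u ∈ e
        · have h2 : e ∉ t.edges ∧ u ∈ e ∧ u ∈ s.verts := ⟨h1.1, h1.2, hus⟩
          rw [if_pos h1, if_pos h2]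
        · rw [if_neg h1, if_neg (fun h => h1 ⟨h.1, h.2.1⟩)]
      · rw [if_neg hus, mul_zero]
        refine (Finset.sum_eq_zero fun e he => ?_).symm
        rw [if_neg (fun h => hus h.2.2)]
    rw [Finset.sum_congr rfl fun u _ => step1 u, Finset.sum_comm]
    refine Finset.sum_congr rfl fun e he => ?_
    by_cases het : e ∈ t.edges
    · rw [if_pos het]
      refine Finset.sum_eq_zero fun u _ => ?_
      rw [if_neg (fun h => h.1 het)]
    · rw [if_neg het, hA (s.verts.filter (fun v => v ∈ e))]
      refine Finset.sum_congr rfl fun u _ => ?_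
      by_cases hm : u ∈ s.verts.filter (fun v => v ∈ e)
      · have hm' := Finset.mem_filter.mp hm
        have h2 : e ∉ t.edges ∧ u ∈ e ∧ u ∈ s.verts := ⟨het, hm'.2, hm'.1⟩
        rw [if_pos h2, if_pos hm]
      · rw [if_neg hm]
        exact if_neg fun h => hm (Finset.mem_filter.mpr ⟨h.2.2, h.2.1⟩)
  have hy : ∑ e : {e : Sym2 V // e ∈ E}, avec t (Sum.inr e) * hvec s (Sum.inr e)
      = ∑ e ∈ E, (if e ∈ s.edges then 0 else (tcap s.verts e : ℝ))
          * (if e ∈ t.edges then 2 else 1 - (tcap t.verts e : ℝ)) := by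
    rw [← Finset.sum_coe_sort E (fun e => (if e ∈ s.edges then 0 else (tcap s.verts e : ℝ))
      * (if e ∈ t.edges then 2 else 1 - (tcap t.verts e : ℝ)))]
    exact Finset.sum_congr rfl fun e _ => mul_comm _ _
  rw [hx, hy, ← Finset.sum_add_distrib]
  exact Finset.sum_congr rfl fun e _ => rfl

lemma term_nonneg (t s : Tube E) {e : Sym2 V} (hd : ¬ e.IsDiag) : 0 ≤ term t s e := by
  obtain ⟨v, w, hvw, rfl⟩ := exists_rep hd
  unfold term
  rw [sum_pair s.verts hvw, tcap_pair t.verts hvw, tcap_pair s.verts hvw]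
  split_ifs <;> norm_num

lemma term_self (t : Tube E) {e : Sym2 V} (hd : ¬ e.IsDiag) : term t t e = 0 := by
  obtain ⟨v, w, hvw, rfl⟩ := exists_rep hd
  unfold term
  rw [sum_pair t.verts hvw, tcap_pair t.verts hvw]
  split_ifs <;> norm_num

lemma term_facts (t s : Tube E) {e : Sym2 V} (hd : ¬ e.IsDiag) (h0 : term t s e = 0) :
    (e ∈ s.edges → e ∈ t.edges) ∧
    (e ∉ s.edges → ∀ u ∈ e, u ∈ s.verts → u ∈ t.verts ∧ e ∉ t.edges) := by
  obtain ⟨v, w, hvw, rfl⟩ := exists_rep hd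
  unfold term at h0
  rw [sum_pair s.verts hvw, tcap_pair t.verts hvw, tcap_pair s.verts hvw] at h0
  constructor
  · intro hes
    by_contra het
    have hv : v ∈ s.verts := s.endpoints_mem _ hes v (Sym2.mem_mk_left v w)
    have hw : w ∈ s.verts := s.endpoints_mem _ hes w (Sym2.mem_mk_right v w)
    rw [if_neg het, if_pos hes, if_pos hv, if_pos hw] at h0
    split_ifs at h0 <;> norm_num at h0
  · intro hes u hu hus
    rw [if_neg hes] at h0
    rw [Sym2.mem_iff] at hu
    by_cases het : s(v, w) ∈ t.edges
    · exfalso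
      rw [if_pos het, if_pos het] at h0
      rcases hu with rfl | rfl
      · rw [if_pos hus] at h0
        split_ifs at h0 <;> norm_num at h0
      · rw [if_pos hus] at h0
        split_ifs at h0 <;> norm_num at h0
    · refine ⟨?_, het⟩
      rw [if_neg het, if_neg het] at h0
      by_contra hut
      rcases hu with rfl | rfl
      · rw [if_pos hus, if_neg hut] at h0
        split_ifs at h0 <;> norm_num at h0
      · rw [if_pos hus, if_neg hut] at h0
        split_ifs at h0 <;> norm_num at h0

lemma dot_add' (a x y : Coord E → ℝ) : dot a (x + y) = dot a x + dot a y := by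
  simp [dot, mul_add, Finset.sum_add_distrib]

lemma dot_smul' (a x : Coord E → ℝ) (c : ℝ) : dot a (c • x) = c * dot a x := by
  simp only [dot, Pi.smul_apply, smul_eq_mul, Finset.mul_sum]
  exact Finset.sum_congr rfl fun i _ => by ring

lemma dot_sum' (a : Coord E → ℝ) {ι : Type} (s : Finset ι) (f : ι → Coord E → ℝ) :
    dot a (∑ i ∈ s, f i) = ∑ i ∈ s, dot a (f i) := by
  classical
  induction s using Finset.induction with
  | empty => simp [dot]
  | insert _ _ h ih => rw [Finset.sum_insert h, dot_add', ih, Finset.sum_insert h]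

lemma hvec_nonneg (s : Tube E) (i : Coord E) : 0 ≤ hvec s i := by
  rcases i with u | e
  · dsimp only [hvec]; split_ifs <;> norm_num
  · dsimp only [hvec]; split_ifs <;> positivity

lemma ell_pos (s : Tube E) : 0 < ell s := by
  obtain ⟨v, hv⟩ := s.nonempty
  rw [ell]
  refine Finset.sum_pos' (fun i _ => hvec_nonneg s i) ⟨Sum.inl v, Finset.mem_univ _, ?_⟩
  dsimp only [hvec]
  rw [if_pos hv]
  norm_num

end AuxStatement1

/-- For every tube `t` of a finite simple graph `G = (V, E)` without
isolated vertices, the point `z_t = h_t/|h_t|₁` is a vertex (extreme point) of the dual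
cosmological polytope `C_G° = conv{ z_s : s ∈ Z(G) }`. -/
theorem statement1 (E : Finset (Sym2 V)) (hE : ∀ e ∈ E, ¬ e.IsDiag)
    (hiso : ∀ v : V, ∃ e ∈ E, v ∈ e) (t : Tube E) :
    zvec t ∈ Set.extremePoints ℝ (dualCosmo E) := by
  classical
  have hnnh : ∀ s : Tube E, 0 ≤ dot (avec t) (hvec s) := fun s => by
    rw [dot_decomp]
    exact Finset.sum_nonneg fun e he => term_nonneg t s (hE e he)
  have hself : dot (avec t) (hvec t) = 0 := by
    rw [dot_decomp]
    exact Finset.sum_eq_zero fun e he => term_self t (hE e he)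
  have hzero : ∀ s : Tube E, dot (avec t) (hvec s) = 0 → s = t := by
    intro s h
    rw [dot_decomp] at h
    have hterm := (Finset.sum_eq_zero_iff_of_nonneg
      (fun e he => term_nonneg t s (hE e he))).mp h
    have hF : ∀ e ∈ E, (e ∈ s.edges → e ∈ t.edges) ∧
        (e ∉ s.edges → ∀ u ∈ e, u ∈ s.verts → u ∈ t.verts ∧ e ∉ t.edges) :=
      fun e he => term_facts t s (hE e he) (hterm e he)
    have hets : s.edges ⊆ t.edges := fun e hes => (hF e (s.edges_sub hes)).1 hes
    have hvst : s.verts ⊆ t.verts := by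
      intro v hv
      by_contra hvt
      obtain ⟨e, heE, hve⟩ := hiso v
      have hnet : e ∉ t.edges := fun h' => hvt (t.endpoints_mem e h' v hve)
      have hnes : e ∉ s.edges := fun h' => hnet (hets h')
      exact hvt ((hF e heE).2 hnes v hve hv).1
    have hvts : t.verts ⊆ s.verts := by
      obtain ⟨v₀, hv₀⟩ := s.nonempty
      intro u hu
      have hconn := t.conn v₀ (hvst hv₀) u hu
      clear hu
      induction hconn with
      | refl => exact hv₀
      | @tail b c hbc hstep ih =>
        by_cases hbcs : s(b, c) ∈ s.edges
        · exact s.endpoints_mem _ hbcs c (Sym2.mem_mk_right b c)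
        · exact absurd hstep
            ((hF _ (t.edges_sub hstep)).2 hbcs b (Sym2.mem_mk_left b c) ih).2
    have hest : t.edges ⊆ s.edges := by
      intro e het
      by_contra hes
      obtain ⟨v, w, hvw, rfl⟩ := exists_rep (hE _ (t.edges_sub het))
      have hvs : v ∈ s.verts := hvts (t.endpoints_mem _ het v (Sym2.mem_mk_left v w))
      exact ((hF _ (t.edges_sub het)).2 hes v (Sym2.mem_mk_left v w) hvs).2 het
    exact Tube.ext' (Finset.Subset.antisymm hvst hvts) (Finset.Subset.antisymm hets hest)
  have hznn : ∀ s : Tube E, 0 ≤ dot (avec t) (zvec s) := by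
    intro s
    rw [zvec, dot_smul']
    exact mul_nonneg (inv_nonneg.mpr (ell_pos s).le) (hnnh s)
  have hzzero : ∀ s : Tube E, dot (avec t) (zvec s) = 0 → s = t := by
    intro s h
    rw [zvec, dot_smul'] at h
    rcases mul_eq_zero.mp h with h' | h'
    · exact absurd h' (inv_ne_zero (ne_of_gt (ell_pos s)))
    · exact hzero s h'
  have hull_nonneg : ∀ x ∈ dualCosmo E, 0 ≤ dot (avec t) x := by
    have hlin : IsLinearMap ℝ (fun z : Coord E → ℝ => dot (avec t) z) :=
      ⟨dot_add' (avec t), fun c x => by simpa using dot_smul' (avec t) x c⟩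
    have hsub : dualCosmo E ⊆ {x : Coord E → ℝ | 0 ≤ dot (avec t) x} := by
      refine convexHull_min ?_ (convex_halfSpace_ge hlin 0)
      rintro z ⟨s, rfl⟩
      exact hznn s
    exact fun x hx => hsub hx
  have face : ∀ x ∈ dualCosmo E, dot (avec t) x = 0 → x = zvec t := by
    intro x hx h0
    have hSet : {z | ∃ s : Tube E, z = zvec s}
        = ↑((Finset.univ : Finset (Tube E)).image fun s => zvec s) := by
      ext z
      simp [eq_comm]
    rw [dualCosmo, hSet, Finset.convexHull_eq] at hx
    obtain ⟨w, hw0, hw1, hwc⟩ := hx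
    rw [Finset.centerMass_eq_of_sum_1 _ _ hw1] at hwc
    have hdot : ∑ y ∈ (Finset.univ : Finset (Tube E)).image (fun s => zvec s),
        w y * dot (avec t) y = 0 := by
      rw [← h0, ← hwc, dot_sum']
      refine Finset.sum_congr rfl fun y _ => ?_
      rw [id_eq, dot_smul']
    have hterms := (Finset.sum_eq_zero_iff_of_nonneg (fun y hy => by
      obtain ⟨s, _, rfl⟩ := Finset.mem_image.mp hy
      exact mul_nonneg (hw0 _ hy) (hznn s))).mp hdot
    have hxz : x = ∑ y ∈ (Finset.univ : Finset (Tube E)).image (fun s => zvec s),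
        w y • zvec t := by
      rw [← hwc]
      refine Finset.sum_congr rfl fun y hy => ?_
      obtain ⟨s, _, rfl⟩ := Finset.mem_image.mp hy
      rw [id_eq]
      by_cases hds : dot (avec t) (zvec s) = 0
      · rw [hzzero s hds]
      · have hw' : w (zvec s) = 0 := by
          rcases mul_eq_zero.mp (hterms _ hy) with h' | h'
          · exact h'
          · exact absurd h' hds
        rw [hw', zero_smul, zero_smul]
    rw [hxz, ← Finset.sum_smul, hw1, one_smul]
  refine ⟨subset_convexHull ℝ _ ⟨t, rfl⟩, ?_⟩
  intro x₁ hx₁ x₂ hx₂ hseg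
  obtain ⟨α, β, hα, hβ, hαβ, hsum⟩ := hseg
  have hd1 : 0 ≤ dot (avec t) x₁ := hull_nonneg x₁ hx₁
  have hd2 : 0 ≤ dot (avec t) x₂ := hull_nonneg x₂ hx₂
  have hcomb : α * dot (avec t) x₁ + β * dot (avec t) x₂ = 0 := by
    rw [← dot_smul', ← dot_smul', ← dot_add', hsum, zvec, dot_smul', hself, mul_zero]
  have hx1z : dot (avec t) x₁ = 0 := by nlinarith
  have hx2z : dot (avec t) x₂ = 0 := by nlinarith
  exact face x₁ hx₁ hx1z
end

section
/- Let C₁, C₂ ⊆ R^(d+1) be closed convex cones that are full-dimensional, pointed, and dual to each other, i.e. C₂ = { x : ⟨x, y⟩ ≥ 0 for all y ∈ C₁ }. Let u ∈ R^(d+1) with ‖u‖ = 1 and ⟨u, x⟩ > 0 for every nonzero x ∈ C₁ ∪ C₂, let H = { x : ⟨u, x⟩ = 1 }, set P₁ = C₁ ∩ H and P₂ = C₂ ∩ H, and let π be the orthogonal projection onto the linear hyperplane u^⊥. Then π(P₁) and π(P₂) are polar dual polytopes in u^⊥; that is, π(P₂) = { w ∈ u^⊥ : ⟨w, w'⟩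 ≥ −1 for all w' ∈ π(P₁) } and symmetrically π(P₁) = { w ∈ u^⊥ : ⟨w, w'⟩ ≥ −1 for all w' ∈ π(P₂) }. -/
open RealInnerProductSpace


private lemma key_aux {E : Type*} [NormedAddCommGroup E] [InnerProductSpace ℝ E]
    (A B : Set E)
    (hAcone : ∀ c : ℝ, 0 ≤ c → ∀ x ∈ A, c • x ∈ A)
    (hdualAB : B = {x | ∀ y ∈ A, 0 ≤ ⟪x, y⟫})
    (u : E) (hu : ‖u‖ = 1)
    (hupos : ∀ x ∈ A, x ≠ 0 → 0 < ⟪u, x⟫) :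
    ((fun x => x - ⟪u, x⟫ • u) '' (B ∩ {x | ⟪u, x⟫ = 1})) =
        {w | ⟪u, w⟫ = 0 ∧
          ∀ w' ∈ (fun x => x - ⟪u, x⟫ • u) '' (A ∩ {x | ⟪u, x⟫ = 1}), -1 ≤ ⟪w, w'⟫} := by
  have huu : ⟪u, u⟫ = (1 : ℝ) := by
    rw [real_inner_self_eq_norm_sq, hu]; norm_num
  have hproj : ∀ x : E, ⟪u, x - ⟪u, x⟫ • u⟫ = 0 := by
    intro x
    rw [inner_sub_right, real_inner_smul_right, huu, mul_one, sub_self]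
  ext w
  constructor
  · rintro ⟨x, ⟨hxB, hx1⟩, rfl⟩
    refine ⟨hproj x, ?_⟩
    rintro w' ⟨y, ⟨hyA, hy1⟩, rfl⟩
    simp only [Set.mem_setOf_eq] at hx1 hy1
    have hxy : (0 : ℝ) ≤ ⟪x, y⟫ := by rw [hdualAB] at hxB; exact hxB y hyA
    have : ⟪x - ⟪u, x⟫ • u, y - ⟪u, y⟫ • u⟫ = ⟪x, y⟫ - 1 := by
      have hx1' : ⟪x, u⟫ = (1:ℝ) := by rw [real_inner_comm]; exact hx1
      rw [inner_sub_left, inner_sub_right, inner_sub_right, real_inner_smul_left,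
        real_inner_smul_left, real_inner_smul_right, real_inner_smul_right, hx1', hy1, huu, hx1]
      ring
    rw [this]
    linarith
  · rintro ⟨hw0, hw⟩
    refine ⟨w + u, ⟨?_, ?_⟩, ?_⟩
    · rw [hdualAB]
      intro y hyA
      rcases eq_or_ne y 0 with rfl | hy0
      · simp
      · have ht : (0 : ℝ) < ⟪u, y⟫ := hupos y hyA hy0
        set t : ℝ := ⟪u, y⟫ with htdef
        have hy' : t⁻¹ • y ∈ A := hAcone t⁻¹ (by positivity) y hyA
        have hy'1 : ⟪u, t⁻¹ • y⟫ = (1 : ℝ) := by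
          rw [real_inner_smul_right, ← htdef, inv_mul_cancel₀ ht.ne']
        have hww' := hw _ ⟨t⁻¹ • y, ⟨hy', hy'1⟩, rfl⟩
        simp only [hy'1, one_smul, inner_sub_right, real_inner_comm w u, hw0, sub_zero,
            real_inner_smul_right] at hww'
        rw [show ⟪w, u⟫ = (0:ℝ) by rw [real_inner_comm]; exact hw0, sub_zero,
            inv_mul_eq_div] at hww'
        have h3 := (le_div_iff₀ ht).mp hww'
        rw [inner_add_left, ← htdef]
        linarith
    · show ⟪u, w + u⟫ = 1
      rw [inner_add_right, hw0, huu, zero_add]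
    · show (w + u) - ⟪u, w + u⟫ • u = w
      rw [inner_add_right, hw0, huu, zero_add, one_smul, add_sub_cancel_right]


/-- Let `C₁, C₂ ⊆ ℝ^(d+1)` be closed convex cones, full-dimensional,
pointed, and dual to each other. Let `u` be a unit vector with `⟨u, x⟩ > 0` for every
nonzero `x ∈ C₁ ∪ C₂`, let `H = {x : ⟨u, x⟩ = 1}`, `P₁ = C₁ ∩ H`, `P₂ = C₂ ∩ H`, and let
`π x = x - ⟨u, x⟩ • u` be the orthogonal projection onto `u^⊥`. Then `π(P₁)` and `π(P₂)`
are polar dual to each other in `u^⊥`. -/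
theorem statement3 (d : ℕ) (C₁ C₂ : Set (EuclideanSpace ℝ (Fin (d + 1))))
    (h₁closed : IsClosed C₁) (h₁convex : Convex ℝ C₁)
    (h₁cone : ∀ c : ℝ, 0 ≤ c → ∀ x ∈ C₁, c • x ∈ C₁)
    (h₁full : (interior C₁).Nonempty) (h₁pointed : C₁ ∩ (-C₁) = {0})
    (h₂closed : IsClosed C₂) (h₂convex : Convex ℝ C₂)
    (h₂cone : ∀ c : ℝ, 0 ≤ c → ∀ x ∈ C₂, c • x ∈ C₂)
    (h₂full : (interior C₂).Nonempty) (h₂pointed : C₂ ∩ (-C₂) = {0})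
    (hdual : C₂ = {x | ∀ y ∈ C₁, 0 ≤ ⟪x, y⟫})
    (u : EuclideanSpace ℝ (Fin (d + 1))) (hu : ‖u‖ = 1)
    (hupos : ∀ x ∈ C₁ ∪ C₂, x ≠ 0 → 0 < ⟪u, x⟫) :
    ((fun x => x - ⟪u, x⟫ • u) '' (C₂ ∩ {x | ⟪u, x⟫ = 1})) =
        {w | ⟪u, w⟫ = 0 ∧
          ∀ w' ∈ (fun x => x - ⟪u, x⟫ • u) '' (C₁ ∩ {x | ⟪u, x⟫ = 1}), -1 ≤ ⟪w, w'⟫} ∧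
    ((fun x => x - ⟪u, x⟫ • u) '' (C₁ ∩ {x | ⟪u, x⟫ = 1})) =
        {w | ⟪u, w⟫ = 0 ∧
          ∀ w' ∈ (fun x => x - ⟪u, x⟫ • u) '' (C₂ ∩ {x | ⟪u, x⟫ = 1}), -1 ≤ ⟪w, w'⟫} := by
  have h0 : (0 : EuclideanSpace ℝ (Fin (d+1))) ∈ C₁ := by
    have : (0 : EuclideanSpace ℝ (Fin (d+1))) ∈ ({0} : Set (EuclideanSpace ℝ (Fin (d+1)))) :=
      rfl
    rw [← h₁pointed] at this
    exact this.1
  set K : ConvexCone ℝ (EuclideanSpace ℝ (Fin (d+1))) :=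
    { carrier := C₁
      smul_mem' := fun c hc x hx => h₁cone c hc.le x hx
      add_mem' := by
        intro x hx y hy
        have hmid := h₁convex hx hy (by norm_num : (0:ℝ) ≤ 1/2) (by norm_num : (0:ℝ) ≤ 1/2)
          (by norm_num)
        have := h₁cone 2 (by norm_num) _ hmid
        rwa [smul_add, smul_smul, smul_smul, show (2:ℝ) * (1/2) = 1 by norm_num,
          one_smul, one_smul] at this } with hK
  have hKset : (K : Set (EuclideanSpace ℝ (Fin (d+1)))) = C₁ := rfl
  have hC₂eq : C₂ = (ProperCone.innerDual C₁ : Set (EuclideanSpace ℝ (Fin (d+1)))) := by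
    ext x
    rw [hdual, SetLike.mem_coe, ProperCone.mem_innerDual]
    constructor
    · intro h y hy; rw [real_inner_comm]; exact h y hy
    · intro h y hy; rw [real_inner_comm]; exact h hy
  have hbidual : ((ProperCone.innerDual ((ProperCone.innerDual C₁ : ProperCone ℝ (EuclideanSpace ℝ (Fin (d+1)))) :
      Set (EuclideanSpace ℝ (Fin (d+1))))) : Set (EuclideanSpace ℝ (Fin (d+1)))) = (K : Set (EuclideanSpace ℝ (Fin (d+1)))) := by
    let P : ProperCone ℝ (EuclideanSpace ℝ (Fin (d+1))) :=
      { carrier := C₁, add_mem' := fun hx hy => K.add_mem hx hy, zero_mem' := h0,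
        smul_mem' := fun c x hx => h₁cone c c.2 x hx, isClosed' := h₁closed }
    exact congrArg (fun Q : ProperCone ℝ (EuclideanSpace ℝ (Fin (d+1))) => (Q : Set (EuclideanSpace ℝ (Fin (d+1))))) (ProperCone.innerDual_innerDual P)
  have hC₁dual : C₁ = {x | ∀ y ∈ C₂, 0 ≤ ⟪x, y⟫} := by
    rw [hKset] at hbidual
    ext x
    constructor
    · intro hx y hy
      rw [hC₂eq, SetLike.mem_coe, ProperCone.mem_innerDual] at hy
      exact hy hx
    · intro hx
      have : x ∈ (ProperCone.innerDual (ProperCone.innerDual C₁ : Set (EuclideanSpace ℝ (Fin (d+1)))) :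
          Set (EuclideanSpace ℝ (Fin (d+1)))) := by
        rw [SetLike.mem_coe, ProperCone.mem_innerDual]
        intro y hy
        rw [real_inner_comm]
        exact hx y (by rw [hC₂eq]; exact hy)
      rw [hbidual] at this
      exact this
  constructor
  · exact key_aux C₁ C₂ h₁cone hdual u hu (fun x hx => hupos x (Or.inl hx))
  · exact key_aux C₂ C₁ h₂cone hC₁dual u hu (fun x hx => hupos x (Or.inr hx))
end
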